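/- For a bipartite graph G, the minimal number of matchings needed to cover all edges of G equals the maximal degree Δ(G). -/

import Mathlib

open Finset

/-- A finset of edges is a matching: distinct edges share no vertex. -/
def IsMatchingSet {V : Type*} (G : SimpleGraph V) (m : Finset (Sym2 V)) : Prop :=
  (∀ e ∈ m, e ∈ G.edgeSet) ∧
    ∀ e ∈ m, ∀ f ∈ m, e ≠ f → ∀ v : V, ¬(v ∈ e ∧ v ∈ f)

lemma fin2_eq (p q r : Fin 2) (h1 : p ≠ q) (h2 : r ≠ q) : p = r := by omega

lemma walk_parity {V : Type*} {G : SimpleGraph V} (c : V → Fin 2)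
    (hc : ∀ a b, G.Adj a b → c a ≠ c b) {x y : V} (p : G.Walk x y) :
    (c x = c y ↔ Even p.length) := by
  induction p with
  | nil => simp
  | cons h q ih =>
    rename_i a b z
    have hab := hc a b h
    rw [SimpleGraph.Walk.length_cons, Nat.even_add_one, ← ih]
    constructor
    · intro hxz hbz
      exact hab (hxz.trans hbz.symm)
    · intro hne
      exact fin2_eq _ _ _ hab (fun h => hne h.symm)

def swapc (α β : ℕ) : ℕ → ℕ := fun x => if x = α then β else if x = β then α else x

lemma swapc_invol (α β x : ℕ) : swapc α β (swapc α β x) = x := by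
  unfold swapc; split_ifs <;> omega

lemma swapc_inj (α β : ℕ) : Function.Injective (swapc α β) :=
  Function.Involutive.injective (swapc_invol α β)

lemma swapc_lt {k α β x : ℕ} (hα : α < k) (hβ : β < k) (hx : x < k) : swapc α β x < k := by
  unfold swapc; split_ifs <;> omega

lemma swapc_left (α β : ℕ) : swapc α β α = β := by simp [swapc]

lemma swapc_other {α β x : ℕ} (h1 : x ≠ α) (h2 : x ≠ β) : swapc α β x = x := by
  simp [swapc, h1, h2]

lemma kempe {V : Type*} (G' : SimpleGraph V) (f' : V → V → ℕ) (k α β : ℕ) (u v : V)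
    (c : V → Fin 2) (hc : ∀ a b, G'.Adj a b → c a ≠ c b)
    (hsym : ∀ x y, f' x y = f' y x)
    (hbnd : ∀ x y, G'.Adj x y → f' x y < k)
    (hprop : ∀ x y z, G'.Adj x y → G'.Adj x z → y ≠ z → f' x y ≠ f' x z)
    (hαk : α < k) (hβk : β < k) (hab : α ≠ β)
    (hαu : ∀ w, G'.Adj u w → f' u w ≠ α)
    (hβv : ∀ w, G'.Adj v w → f' v w ≠ β)
    (hcuv : c u ≠ c v) :
    ∃ f'' : V → V → ℕ, (∀ x y, f'' x y = f'' y x) ∧ (∀ x y, G'.Adj x y → f'' x y < k) ∧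
      (∀ x y z, G'.Adj x y → G'.Adj x z → y ≠ z → f'' x y ≠ f'' x z) ∧
      (∀ w, G'.Adj u w → f'' u w ≠ α) ∧ (∀ w, G'.Adj v w → f'' v w ≠ α) := by
  classical
  set H : SimpleGraph V :=
    { Adj := fun x y => G'.Adj x y ∧ (f' x y = α ∨ f' x y = β),
      symm := by
        constructor
        rintro x y ⟨h1, h2⟩
        exact ⟨h1.symm, by rwa [hsym y x]⟩,
      loopless := ⟨fun x hx => G'.loopless.irrefl x hx.1⟩ } with hH
  have hHadj : ∀ x y, H.Adj x y ↔ (G'.Adj x y ∧ (f' x y = α ∨ f' x y = β)) := by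
    intro x y; rw [hH]
  -- the alternating path lemma
  have ALT : ∀ (y t : V) (q : H.Walk y t), t = v → ∀ (x : V) (hxy : H.Adj x y),
      (SimpleGraph.Walk.cons hxy q).IsPath → f' x y = if Even q.length then α else β := by
    intro y t q
    induction q with
    | nil =>
      intro ht x hxy _
      simp only [SimpleGraph.Walk.length_nil, Even.zero, if_true]
      rw [ht] at hxy
      rw [ht]
      have h1 := ((hHadj x v).mp hxy).2
      have h2 : f' x v ≠ β := by rw [hsym x v]; exact hβv x ((hHadj x v).mp hxy).1.symm
      rcases h1 with h1 | h1
      · exact h1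
      · exact absurd h1 h2
    | @cons y' z' t' h' q'' ih =>
      intro ht x hxy hp
      -- h' : H.Adj y' z', q'' : H.Walk z' v, hxy : H.Adj x y'
      have hp' : (SimpleGraph.Walk.cons h' q'').IsPath := hp.of_cons
      have h2 := ih ht y' h' hp'
      have hxz : x ≠ z' := by
        have hnx : x ∉ (SimpleGraph.Walk.cons h' q'').support :=
          (SimpleGraph.Walk.cons_isPath_iff _ _).mp hp |>.2
        intro heq
        apply hnx
        rw [SimpleGraph.Walk.support_cons, heq]
        exact List.mem_cons_of_mem _ q''.start_mem_support
      have h1 := ((hHadj x y').mp hxy).2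
      have hne2 : f' x y' ≠ f' y' z' := by
        rw [hsym x y']
        exact hprop y' x z' ((hHadj x y').mp hxy).1.symm ((hHadj y' z').mp h').1 hxz
      by_cases hev : Even q''.length
      · rw [if_pos hev] at h2
        rw [SimpleGraph.Walk.length_cons, if_neg (by simp [Nat.even_add_one, hev])]
        rcases h1 with h1 | h1
        · exact absurd (h1.trans h2.symm) hne2
        · exact h1
      · rw [if_neg hev] at h2
        rw [SimpleGraph.Walk.length_cons, if_pos (by simp [Nat.even_add_one, hev])]
        rcases h1 with h1 | h1
        · exact h1
        · exact absurd (h1.trans h2.symm) hne2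
  -- u is not reachable from v in H
  have hur : ¬ H.Reachable v u := by
    intro hr
    obtain ⟨w⟩ := hr.symm
    obtain ⟨pw, hpw⟩ := w.toPath
    cases pw with
    | nil => exact hcuv rfl
    | cons h q =>
      rename_i y'
      have halt := ALT y' v q rfl u h hpw
      have hne1 : f' u y' ≠ α := hαu y' ((hHadj u y').mp h).1
      by_cases hev : Even q.length
      · rw [if_pos hev] at halt
        exact hne1 halt
      · have hle2 : H ≤ G' := by intro x y hxy; exact ((hHadj x y).mp hxy).1
        have hWlen : ((SimpleGraph.Walk.cons h q).mapLe hle2).length = q.length + 1 := by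
          simp [SimpleGraph.Walk.mapLe]
        have hpar := (walk_parity c hc ((SimpleGraph.Walk.cons h q).mapLe hle2)).2
          (by rw [hWlen]; exact Nat.even_add_one.mpr hev)
        exact hcuv hpar
  -- the recolored function
  refine ⟨fun x y => if H.Reachable v x ∧ H.Reachable v y then swapc α β (f' x y) else f' x y,
    ?_, ?_, ?_, ?_, ?_⟩
  · intro x y
    by_cases hx : H.Reachable v x <;> by_cases hy : H.Reachable v y <;>
      simp [hx, hy, hsym x y]
  · intro x y h
    dsimp only
    split_ifs
    · exact swapc_lt hαk hβk (hbnd x y h)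
    · exact hbnd x y h
  · have P1 : ∀ x y, H.Reachable v x → G'.Adj x y →
        (if H.Reachable v x ∧ H.Reachable v y then swapc α β (f' x y) else f' x y)
          = swapc α β (f' x y) := by
      intro x y hx hxy
      by_cases hy : H.Reachable v y
      · rw [if_pos ⟨hx, hy⟩]
      · have hno : ¬(f' x y = α ∨ f' x y = β) := by
          intro hcol
          exact hy (hx.trans (SimpleGraph.Adj.reachable ((hHadj x y).mpr ⟨hxy, hcol⟩)))
        push_neg at hno
        rw [if_neg (fun hcond => hy hcond.2), swapc_other hno.1 hno.2]
    intro x y z hxy hxz hyz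
    dsimp only
    by_cases hx : H.Reachable v x
    · rw [P1 x y hx hxy, P1 x z hx hxz]
      exact fun h => hprop x y z hxy hxz hyz (swapc_inj α β h)
    · rw [if_neg (fun hcond => hx hcond.1), if_neg (fun hcond => hx hcond.1)]
      exact hprop x y z hxy hxz hyz
  · intro w hw
    dsimp only
    rw [if_neg (fun hcond => hur hcond.1)]
    exact hαu w hw
  · intro w hw
    dsimp only
    have hvv : H.Reachable v v := SimpleGraph.Reachable.refl v
    by_cases hy : H.Reachable v w
    · rw [if_pos ⟨hvv, hy⟩]
      intro h
      have := congrArg (swapc α β) h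
      rw [swapc_invol, swapc_left] at this
      exact hβv w hw this
    · have hno : ¬(f' v w = α ∨ f' v w = β) := by
        intro hcol
        exact hy (SimpleGraph.Adj.reachable ((hHadj v w).mpr ⟨hw, hcol⟩))
      push_neg at hno
      rw [if_neg (fun hcond => hy hcond.2)]
      exact hno.1

lemma exists_missing2 {V : Type*} [Fintype V] (G' : SimpleGraph V) (f : V → V → ℕ) (k : ℕ)
    (u : V) (hub : ∀ w, G'.Adj u w → f u w < k)
    (hcard : (G'.neighborSet u).ncard < k) :
    ∃ α, α < k ∧ ∀ w, G'.Adj u w → f u w ≠ α := by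
  classical
  set used : Finset ℕ := ((G'.neighborSet u).toFinite.toFinset).image (f u) with hused
  have hsub : used ⊆ Finset.range k := by
    intro a ha
    rw [hused, Finset.mem_image] at ha
    obtain ⟨w, hw, rfl⟩ := ha
    rw [Set.Finite.mem_toFinset] at hw
    exact Finset.mem_range.mpr (hub w hw)
  have hlt : used.card < k := by
    calc used.card ≤ ((G'.neighborSet u).toFinite.toFinset).card := Finset.card_image_le
    _ = (G'.neighborSet u).ncard := (Set.ncard_eq_toFinset_card _ (G'.neighborSet u).toFinite).symm
    _ < k := hcard
  have : ¬ (Finset.range k ⊆ used) := by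
    intro hsub2
    have := Finset.card_le_card hsub2
    simp at this; omega
  obtain ⟨α, hα1, hα2⟩ := Finset.not_subset.mp this
  refine ⟨α, Finset.mem_range.mp hα1, fun w hw heq => hα2 ?_⟩
  rw [hused, Finset.mem_image]
  exact ⟨w, Set.Finite.mem_toFinset _ |>.mpr hw, heq⟩

lemma key_coloring {V : Type*} [Fintype V] [DecidableEq V] (c : V → Fin 2) (k : ℕ) :
    ∀ n (G : SimpleGraph V), G.edgeSet.ncard ≤ n →
      (∀ a b, G.Adj a b → c a ≠ c b) →
      (∀ v, (G.neighborSet v).ncard ≤ k) →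
      ∃ f : V → V → ℕ, (∀ x y, f x y = f y x) ∧ (∀ x y, G.Adj x y → f x y < k) ∧
        (∀ x y z, G.Adj x y → G.Adj x z → y ≠ z → f x y ≠ f x z) := by
  intro n
  induction n with
  | zero =>
    intro G hcard hc hdeg
    have hE : G.edgeSet = ∅ := by
      rw [← Set.ncard_eq_zero (Set.toFinite _)]; omega
    refine ⟨fun _ _ => 0, fun _ _ => rfl, ?_, ?_⟩
    · intro x y h
      exact absurd (G.mem_edgeSet.mpr h) (by rw [hE]; exact Set.notMem_empty _)
    · intro x y z h _ _
      exact absurd (G.mem_edgeSet.mpr h) (by rw [hE]; exact Set.notMem_empty _)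
  | succ n ih =>
    intro G hcard hc hdeg
    classical
    by_cases hE : G.edgeSet = ∅
    · refine ⟨fun _ _ => 0, fun _ _ => rfl, ?_, ?_⟩
      · intro x y h
        exact absurd (G.mem_edgeSet.mpr h) (by rw [hE]; exact Set.notMem_empty _)
      · intro x y z h _ _
        exact absurd (G.mem_edgeSet.mpr h) (by rw [hE]; exact Set.notMem_empty _)
    · obtain ⟨e, he⟩ := Set.nonempty_iff_ne_empty.mpr hE
      induction e using Sym2.ind with
      | _ u v =>
      rw [SimpleGraph.mem_edgeSet] at he
      rename' he => huv
      set G' : SimpleGraph V := G.deleteEdges {s(u,v)} with hG'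
      have hle : G' ≤ G := SimpleGraph.deleteEdges_le _
      have hadj' : ∀ x y, G'.Adj x y ↔ (G.Adj x y ∧ s(x,y) ≠ s(u,v)) := by
        intro x y
        rw [hG', SimpleGraph.deleteEdges_adj]
        simp
      have hadju : ∀ w, G'.Adj u w ↔ (G.Adj u w ∧ w ≠ v) := by
        intro w
        rw [hadj' u w]
        constructor
        · rintro ⟨h1, h2⟩
          refine ⟨h1, fun hw => h2 (by rw [hw])⟩
        · rintro ⟨h1, h2⟩
          refine ⟨h1, fun hw => ?_⟩
          rw [Sym2.eq_iff] at hw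
          rcases hw with ⟨_, h⟩ | ⟨h1', h2'⟩
          · exact h2 h
          · exact (G.ne_of_adj huv) h1'
      have hadjv : ∀ w, G'.Adj v w ↔ (G.Adj v w ∧ w ≠ u) := by
        intro w
        rw [hadj' v w]
        constructor
        · rintro ⟨h1, h2⟩
          refine ⟨h1, fun hw => h2 (by rw [hw, Sym2.eq_swap])⟩
        · rintro ⟨h1, h2⟩
          refine ⟨h1, fun hw => ?_⟩
          rw [Sym2.eq_iff] at hw
          rcases hw with ⟨h1', h2'⟩ | ⟨h1', h2'⟩
          · exact (G.ne_of_adj huv) h1'.symm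
          · exact h2 h2'
      have hElt : G'.edgeSet.ncard ≤ n := by
        have h1 : G'.edgeSet = G.edgeSet \ {s(u,v)} := by
          rw [hG', SimpleGraph.edgeSet_deleteEdges]
        have h2 : (G.edgeSet \ {s(u,v)}).ncard = G.edgeSet.ncard - 1 :=
          Set.ncard_diff_singleton_of_mem (G.mem_edgeSet.mpr huv)
        have h3 : 0 < G.edgeSet.ncard :=
          (Set.ncard_pos (Set.toFinite _)).mpr ⟨_, G.mem_edgeSet.mpr huv⟩
        rw [h1, h2]; omega
      have hdeg' : ∀ w, (G'.neighborSet w).ncard ≤ k := by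
        intro w
        refine le_trans (Set.ncard_le_ncard ?_ (Set.toFinite _)) (hdeg w)
        intro x hx
        exact hle hx
      have hc' : ∀ a b, G'.Adj a b → c a ≠ c b := fun a b h => hc a b (hle h)
      obtain ⟨f', hsym, hbnd, hprop⟩ := ih G' hElt hc' hdeg'
      have hcardu : (G'.neighborSet u).ncard < k := by
        have hsub : G'.neighborSet u ⊆ G.neighborSet u \ {v} := by
          intro w hw
          have := (hadju w).mp hw
          exact ⟨this.1, by simp [this.2]⟩
        have h1 : (G'.neighborSet u).ncard ≤ (G.neighborSet u \ {v}).ncard :=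
          Set.ncard_le_ncard hsub (Set.toFinite _)
        have h2 : (G.neighborSet u \ {v}).ncard = (G.neighborSet u).ncard - 1 :=
          Set.ncard_diff_singleton_of_mem huv
        have h3 : 0 < (G.neighborSet u).ncard := (Set.ncard_pos (Set.toFinite _)).mpr ⟨v, huv⟩
        have h4 := hdeg u
        omega
      have hcardv : (G'.neighborSet v).ncard < k := by
        have hsub : G'.neighborSet v ⊆ G.neighborSet v \ {u} := by
          intro w hw
          have := (hadjv w).mp hw
          exact ⟨this.1, by simp [this.2]⟩
        have h1 : (G'.neighborSet v).ncard ≤ (G.neighborSet v \ {u}).ncard :=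
          Set.ncard_le_ncard hsub (Set.toFinite _)
        have h2 : (G.neighborSet v \ {u}).ncard = (G.neighborSet v).ncard - 1 :=
          Set.ncard_diff_singleton_of_mem huv.symm
        have h3 : 0 < (G.neighborSet v).ncard := (Set.ncard_pos (Set.toFinite _)).mpr ⟨u, huv.symm⟩
        have h4 := hdeg v
        omega
      obtain ⟨α, hαk, hαu⟩ := exists_missing2 G' f' k u (fun w hw => hbnd u w hw) hcardu
      obtain ⟨β, hβk, hβv⟩ := exists_missing2 G' f' k v (fun w hw => hbnd v w hw) hcardv
      have hne : u ≠ v := G.ne_of_adj huv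
      -- get a coloring of G' with α missing at both u and v
      have hsuff : ∃ f'' : V → V → ℕ, (∀ x y, f'' x y = f'' y x) ∧
          (∀ x y, G'.Adj x y → f'' x y < k) ∧
          (∀ x y z, G'.Adj x y → G'.Adj x z → y ≠ z → f'' x y ≠ f'' x z) ∧
          (∀ w, G'.Adj u w → f'' u w ≠ α) ∧ (∀ w, G'.Adj v w → f'' v w ≠ α) := by
        by_cases hmiss : ∀ w, G'.Adj v w → f' v w ≠ α
        · exact ⟨f', hsym, hbnd, hprop, hαu, hmiss⟩
        · push_neg at hmiss
          obtain ⟨w0, hw0, hw0α⟩ := hmiss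
          have hab : α ≠ β := fun h => hβv w0 hw0 (hw0α.trans h)
          exact kempe G' f' k α β u v c hc' hsym hbnd hprop hαk hβk hab hαu hβv
            (hc u v huv)
      obtain ⟨f'', hsym2, hbnd2, hprop2, hmu, hmv⟩ := hsuff
      refine ⟨fun x y => if (x = u ∧ y = v) ∨ (x = v ∧ y = u) then α else f'' x y, ?_, ?_, ?_⟩
      · intro x y
        dsimp only
        by_cases h : (x = u ∧ y = v) ∨ (x = v ∧ y = u)
        · rw [if_pos h, if_pos (by tauto)]
        · rw [if_neg h, if_neg (by tauto), hsym2 x y]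
      · intro x y hxy
        dsimp only
        split_ifs with h
        · exact hαk
        · apply hbnd2
          rw [hadj' x y]
          refine ⟨hxy, fun hSe => ?_⟩
          rw [Sym2.eq_iff] at hSe
          tauto
      · intro x y z hxy hxz hyz
        dsimp only
        have hG'xy : ¬((x = u ∧ y = v) ∨ (x = v ∧ y = u)) → G'.Adj x y := by
          intro h
          rw [hadj' x y]
          refine ⟨hxy, fun hSe => ?_⟩
          rw [Sym2.eq_iff] at hSe
          tauto
        have hG'xz : ¬((x = u ∧ z = v) ∨ (x = v ∧ z = u)) → G'.Adj x z := by
          intro h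
          rw [hadj' x z]
          refine ⟨hxz, fun hSe => ?_⟩
          rw [Sym2.eq_iff] at hSe
          tauto
        by_cases h1 : (x = u ∧ y = v) ∨ (x = v ∧ y = u) <;>
          by_cases h2 : (x = u ∧ z = v) ∨ (x = v ∧ z = u)
        · rw [if_pos h1, if_pos h2]
          intro _
          rcases h1 with ⟨e1, e2⟩ | ⟨e1, e2⟩ <;> rcases h2 with ⟨e3, e4⟩ | ⟨e3, e4⟩
          · exact hyz (e2.trans e4.symm)
          · exact hne (e1.symm.trans e3)
          · exact hne (e3.symm.trans e1)
          · exact hyz (e2.trans e4.symm)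
        · rw [if_pos h1, if_neg h2]
          have hadj2 := hG'xz h2
          rcases h1 with ⟨rfl, rfl⟩ | ⟨rfl, rfl⟩
          · exact fun hh => hmu z hadj2 hh.symm
          · exact fun hh => hmv z hadj2 hh.symm
        · rw [if_neg h1, if_pos h2]
          have hadj2 := hG'xy h1
          rcases h2 with ⟨rfl, rfl⟩ | ⟨rfl, rfl⟩
          · exact hmu y hadj2
          · exact hmv y hadj2
        · rw [if_neg h1, if_neg h2]
          exact hprop2 x y z (hG'xy h1) (hG'xz h2) hyz

/-- König's edge coloring theorem: for a bipartite graph the minimal number of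
matchings covering all edges equals the maximal degree. -/
theorem stmt1 {V : Type*} [Fintype V] [DecidableEq V] (G : SimpleGraph V)
    [DecidableRel G.Adj] (hbip : G.Colorable 2) (hne : G.edgeSet.Nonempty) :
    sInf {k : ℕ | ∃ F : Finset (Finset (Sym2 V)), (∀ m ∈ F, IsMatchingSet G m) ∧
        (∀ e ∈ G.edgeSet, ∃ m ∈ F, e ∈ m) ∧ F.card = k} = G.maxDegree := by
  classical
  obtain ⟨C⟩ := hbip
  have hc : ∀ a b, G.Adj a b → C a ≠ C b := fun a b h => C.valid h
  set K := G.maxDegree with hK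
  have hdeg : ∀ v, (G.neighborSet v).ncard ≤ K := by
    intro v
    have h1 : (G.neighborSet v).ncard = G.degree v := by
      rw [Set.ncard_eq_toFinset_card']
      simp [SimpleGraph.degree, SimpleGraph.neighborFinset]
    rw [h1, hK]
    exact G.degree_le_maxDegree v
  obtain ⟨f, hsym, hbnd, hprop⟩ :=
    key_coloring (fun v => C v) K G.edgeSet.ncard G le_rfl hc hdeg
  have hedge : ∀ (e : Sym2 V), e ∈ G.edgeSet → ∀ v, v ∈ e → ∃ w, G.Adj v w ∧ e = s(v, w) := by
    intro e
    induction e using Sym2.ind with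
    | _ a b =>
    intro he v hv
    rw [SimpleGraph.mem_edgeSet] at he
    rw [Sym2.mem_iff] at hv
    rcases hv with rfl | rfl
    · exact ⟨b, he, rfl⟩
    · exact ⟨a, he.symm, Sym2.eq_swap⟩
  set S := {k : ℕ | ∃ F : Finset (Finset (Sym2 V)), (∀ m ∈ F, IsMatchingSet G m) ∧
      (∀ e ∈ G.edgeSet, ∃ m ∈ F, e ∈ m) ∧ F.card = k} with hS
  set F0 : Finset (Finset (Sym2 V)) := (Finset.range K).image
    (fun i => G.edgeFinset.filter (fun e => Sym2.lift ⟨f, hsym⟩ e = i)) with hF0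
  have hmatch : ∀ i : ℕ, IsMatchingSet G (G.edgeFinset.filter (fun e => Sym2.lift ⟨f, hsym⟩ e = i)) := by
    intro i
    constructor
    · intro e hee
      exact SimpleGraph.mem_edgeFinset.mp (Finset.mem_filter.mp hee).1
    · rintro e hee e' hee' hnee v ⟨hv1, hv2⟩
      obtain ⟨he, hce⟩ := Finset.mem_filter.mp hee
      obtain ⟨he', hce'⟩ := Finset.mem_filter.mp hee'
      obtain ⟨w1, hw1, rfl⟩ := hedge e (SimpleGraph.mem_edgeFinset.mp he) v hv1
      obtain ⟨w2, hw2, rfl⟩ := hedge e' (SimpleGraph.mem_edgeFinset.mp he') v hv2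
      have hc1 : f v w1 = i := by simpa using hce
      have hc2 : f v w2 = i := by simpa using hce'
      have hww : w1 ≠ w2 := fun h => hnee (by rw [h])
      exact hprop v w1 w2 hw1 hw2 hww (hc1.trans hc2.symm)
  have hlift : ∀ e ∈ G.edgeSet, Sym2.lift (⟨f, hsym⟩ :
      {g : V → V → ℕ // ∀ a₁ a₂, g a₁ a₂ = g a₂ a₁}) e < K := by
    intro e
    induction e using Sym2.ind with
    | _ a b =>
    intro he
    simpa using hbnd a b (G.mem_edgeSet.mp he)
  have hSmem : F0.card ∈ S := by
    refine ⟨F0, ?_, ?_, rfl⟩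
    · intro m hm
      obtain ⟨i, _, rfl⟩ := Finset.mem_image.mp hm
      exact hmatch i
    · intro e he
      refine ⟨G.edgeFinset.filter (fun e' => Sym2.lift ⟨f, hsym⟩ e' = Sym2.lift ⟨f, hsym⟩ e),
        ?_, ?_⟩
      · exact Finset.mem_image.mpr ⟨_, Finset.mem_range.mpr (hlift e he), rfl⟩
      · exact Finset.mem_filter.mpr ⟨SimpleGraph.mem_edgeFinset.mpr he, rfl⟩
  have h1 : sInf S ≤ K := by
    refine le_trans (Nat.sInf_le hSmem) ?_
    calc F0.card ≤ (Finset.range K).card := Finset.card_image_le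
    _ = K := Finset.card_range K
  have hSne : S.Nonempty := ⟨_, hSmem⟩
  have h2 : K ≤ sInf S := by
    obtain ⟨F, hmat, hcov, hFcard⟩ := Nat.sInf_mem hSne
    haveI : Nonempty V := ⟨hne.some.out.1⟩
    obtain ⟨v0, hv0⟩ := G.exists_maximal_degree_vertex
    rw [hK, hv0, ← hFcard]
    have hinj := Finset.card_le_card_of_injOn
      (f := fun w => if h : G.Adj v0 w then (hcov s(v0,w) h).choose else ∅)
      (s := G.neighborFinset v0) (t := F) ?_ ?_
    · exact hinj
    · intro w hw
      rw [Finset.mem_coe, SimpleGraph.mem_neighborFinset] at hw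
      simp only [dif_pos hw]
      exact (hcov s(v0,w) hw).choose_spec.1
    · intro w1 hw1 w2 hw2 heq
      rw [Finset.mem_coe, SimpleGraph.mem_neighborFinset] at hw1 hw2
      simp only [dif_pos hw1, dif_pos hw2] at heq
      by_contra hne12
      have hm1 : s(v0,w1) ∈ (hcov s(v0,w1) hw1).choose := (hcov s(v0,w1) hw1).choose_spec.2
      have hm2 : s(v0,w2) ∈ (hcov s(v0,w1) hw1).choose := by
        rw [heq]
        exact (hcov s(v0,w2) hw2).choose_spec.2
      have hmF : (hcov s(v0,w1) hw1).choose ∈ F := (hcov s(v0,w1) hw1).choose_spec.1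
      have hdiff : s(v0,w1) ≠ s(v0,w2) := fun h => hne12 (Sym2.congr_right.mp h)
      exact (hmat _ hmF).2 _ hm1 _ hm2 hdiff v0 ⟨Sym2.mem_mk_left _ _, Sym2.mem_mk_left _ _⟩
  omega
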